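/- Let V and C be finite types, ω : V → ℕ, f : V → C, and p ∈ C; for a vote function h, the score of candidate c under h is ∑_{v : h v = c} ω v, and p is a winner under h if every candidate's score is at most p's score. Suppose g : V → C is such that p is a winner under g. Define g' : V → C by g' v = p if g v ≠ f v and g' v = f v otherwise. Then p is a winner under g' and {v | g' v ≠ f v} ⊆ {v | g v ≠ f v}. -/
import Mathlib


/-- The weighted plurality score of candidate `c` under vote function `h`. -/
def wplScore {V C : Type*} [Fintype V] [DecidableEq C] (ω : V → ℕ) (h : V → C) (c : C) : ℕ :=
  ∑ v ∈ Finset.univ.filter fun v => h v = c, ω v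

/-- In weighted plurality bribery it only makes sense to bribe voters to vote for `p`:
redirecting all bribed voters to `p` preserves `p`'s victory and does not enlarge the
set of bribed voters. -/
theorem plurality_bribe_to_p
    {V C : Type*} [Fintype V] [DecidableEq C]
    (ω : V → ℕ) (f : V → C) (p : C) (g : V → C)
    (hwin : ∀ c, wplScore ω g c ≤ wplScore ω g p)
    (g' : V → C) (hg' : ∀ v, g' v = if g v ≠ f v then p else f v) :
    (∀ c, wplScore ω g' c ≤ wplScore ω g' p) ∧
      {v | g' v ≠ f v} ⊆ {v | g v ≠ f v} := by
  have hp : wplScore ω g p ≤ wplScore ω g' p := by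
    apply Finset.sum_le_sum_of_subset
    intro v hv
    simp only [Finset.mem_filter, Finset.mem_univ, true_and] at hv ⊢
    rw [hg' v]
    by_cases h : g v = f v
    · rw [if_neg (by simp [h]), ← h, hv]
    · simp [h]
  refine ⟨fun c => ?_, fun v hv => ?_⟩
  · by_cases hc : c = p
    · simp [hc]
    · calc wplScore ω g' c ≤ wplScore ω g c := by
            apply Finset.sum_le_sum_of_subset
            intro v hv
            simp only [Finset.mem_filter, Finset.mem_univ, true_and] at hv ⊢
            rw [hg' v] at hv
            by_cases h : g v = f v
            · simp [h] at hv; rw [h, hv]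
            · simp [h] at hv; exact absurd hv.symm hc
        _ ≤ wplScore ω g p := hwin c
        _ ≤ wplScore ω g' p := hp
  · simp only [Set.mem_setOf_eq] at hv ⊢
    intro h
    apply hv
    rw [hg' v, h]
    simp
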